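/- The function φ(p) := p·ln(1 + 1/(2κp)) − √(c/κ), defined for p > 0 with κ, c > 0, has a root in (0, ∞) if and only if c < 1/(4κ); moreover such a root is unique. -/

import Mathlib

open Real Set

lemma phi_hasDeriv (κ : ℝ) (hκ : 0 < κ) {p : ℝ} (hp : 0 < p) :
    HasDerivAt (fun p => p * Real.log (1 + 1 / (2 * κ * p)))
      (Real.log (1 + 1 / (2 * κ * p)) - 1 / (2 * κ * p + 1)) p := by
  have h0 : (0:ℝ) < 2 * κ * p := by positivity
  have h0' : (2 * κ * p) ≠ 0 := ne_of_gt h0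
  have hy : (0:ℝ) < 1 + 1 / (2 * κ * p) := by positivity
  have h1 : HasDerivAt (fun p : ℝ => 2 * κ * p) (2 * κ) p := by
    simpa using (hasDerivAt_id p).const_mul (2 * κ)
  have h2 : HasDerivAt (fun p : ℝ => (2 * κ * p)⁻¹) (-(2 * κ) / (2 * κ * p) ^ 2) p :=
    h1.inv h0'
  have h3 : HasDerivAt (fun p : ℝ => 1 + (2 * κ * p)⁻¹) (-(2 * κ) / (2 * κ * p) ^ 2) p :=
    h2.const_add 1
  have hy' : 1 + (2 * κ * p)⁻¹ ≠ 0 := by rw [← one_div]; exact ne_of_gt hy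
  have h4 := h3.log hy'
  have h5 := (hasDerivAt_id p).mul h4
  have heq : ∀ x : ℝ, x * Real.log (1 + (2 * κ * x)⁻¹) = x * Real.log (1 + 1 / (2 * κ * x)) := by
    intro x; rw [one_div]
  have h6 : HasDerivAt (fun p => p * Real.log (1 + 1 / (2 * κ * p)))
      (1 * Real.log (1 + (2 * κ * p)⁻¹) + p * (-(2 * κ) / (2 * κ * p) ^ 2 / (1 + (2 * κ * p)⁻¹))) p := by
    simpa [one_div, Pi.mul_def] using h5
  convert h6 using 1
  rw [one_div, one_mul]
  field_simp
  ring

lemma phi_strictMono (κ : ℝ) (hκ : 0 < κ) :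
    StrictMonoOn (fun p => p * Real.log (1 + 1 / (2 * κ * p))) (Set.Ioi 0) := by
  apply strictMonoOn_of_deriv_pos (convex_Ioi 0)
  · intro p hp
    exact (phi_hasDeriv κ hκ hp).continuousAt.continuousWithinAt
  · intro p hp
    rw [interior_Ioi] at hp
    have hp' : (0:ℝ) < p := hp
    rw [(phi_hasDeriv κ hκ hp').deriv]
    have h0 : (0:ℝ) < 2 * κ * p := by positivity
    have hy : (1:ℝ) < 1 + 1 / (2 * κ * p) := by
      have : (0:ℝ) < 1 / (2 * κ * p) := by positivity
      linarith
    have hlt := Real.log_lt_sub_one_of_pos (x := (1 + 1 / (2 * κ * p))⁻¹)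
      (by positivity) (by
        rw [ne_eq, inv_eq_one]; linarith)
    rw [Real.log_inv] at hlt
    have hinv : (1 + 1 / (2 * κ * p))⁻¹ = 2 * κ * p / (2 * κ * p + 1) := by
      field_simp
    rw [hinv] at hlt
    have : 1 - 2 * κ * p / (2 * κ * p + 1) = 1 / (2 * κ * p + 1) := by
      field_simp
      ring
    nlinarith [hlt]

theorem phi_root_iff (κ c : ℝ) (hκ : 0 < κ) (hc : 0 < c) :
    ((∃ p ∈ Set.Ioi (0 : ℝ),
        p * Real.log (1 + 1 / (2 * κ * p)) - Real.sqrt (c / κ) = 0) ↔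
      c < 1 / (4 * κ)) ∧
    (∀ p ∈ Set.Ioi (0 : ℝ),
      p * Real.log (1 + 1 / (2 * κ * p)) - Real.sqrt (c / κ) = 0 →
      ∀ q ∈ Set.Ioi (0 : ℝ),
        q * Real.log (1 + 1 / (2 * κ * q)) - Real.sqrt (c / κ) = 0 → q = p) := by
  set f : ℝ → ℝ := fun p => p * Real.log (1 + 1 / (2 * κ * p)) with hf
  set t : ℝ := Real.sqrt (c / κ) with htdef
  have ht0 : 0 < t := Real.sqrt_pos.2 (by positivity)
  have ht2 : t ^ 2 = c / κ := Real.sq_sqrt (by positivity)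
  -- upper bound: f p < 1/(2κ) for p > 0
  have hub : ∀ p : ℝ, 0 < p → f p < 1 / (2 * κ) := by
    intro p hp
    have h0 : (0:ℝ) < 2 * κ * p := by positivity
    have hu : (0:ℝ) < 1 / (2 * κ * p) := by positivity
    have hlog : Real.log (1 + 1 / (2 * κ * p)) < 1 / (2 * κ * p) := by
      have := Real.log_lt_sub_one_of_pos (x := 1 + 1 / (2 * κ * p)) (by linarith)
        (by intro h; linarith)
      linarith
    have : f p < p * (1 / (2 * κ * p)) := by
      exact mul_lt_mul_of_pos_left hlog hp
    have heq : p * (1 / (2 * κ * p)) = 1 / (2 * κ) := by field_simp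
    linarith [heq ▸ this]
  constructor
  · constructor
    · rintro ⟨p, hp, hroot⟩
      have hp' : 0 < p := hp
      have : t = f p := by simp only [hf]; linarith [hroot]
      have hlt : t < 1 / (2 * κ) := this ▸ hub p hp'
      have hpos : (0:ℝ) < 1 / (2 * κ) := by positivity
      have hsq : t ^ 2 < (1 / (2 * κ)) ^ 2 := by nlinarith [ht0, hlt, hpos]
      have he : (1 / (2 * κ)) ^ 2 = 1 / (4 * κ) / κ := by field_simp; ring
      rw [he, ht2] at hsq
      exact (div_lt_div_iff_of_pos_right hκ).mp hsq
    · intro hclt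
      -- t < 1/(2κ)
      have hlt : t < 1 / (2 * κ) := by
        have h1 : t ^ 2 < (1 / (2 * κ)) ^ 2 := by
          rw [ht2]
          have he : (1 / (2 * κ)) ^ 2 = 1 / (4 * κ) / κ := by field_simp; ring
          rw [he]
          exact (div_lt_div_iff_of_pos_right hκ).mpr hclt
        nlinarith [ht0.le, h1, (by positivity : (0:ℝ) < 1 / (2*κ))]
      -- small side: a := κ t^2 / 4 has f a < t
      set a : ℝ := κ * t ^ 2 / 4 with hadef
      have ha : 0 < a := by positivity
      have hfa : f a < t := by
        set u : ℝ := 1 / (2 * κ * a) with hudef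
        have hu : 0 < u := by positivity
        set s : ℝ := Real.sqrt u with hsdef
        have hs0 : 0 ≤ s := Real.sqrt_nonneg u
        have hs2 : s ^ 2 = u := Real.sq_sqrt hu.le
        have hlog : Real.log (1 + u) ≤ 2 * s := by
          have h1 : Real.log (1 + u) = 2 * Real.log (Real.sqrt (1 + u)) := by
            rw [Real.log_sqrt (by positivity)]; ring
          have h2 : Real.log (Real.sqrt (1 + u)) ≤ Real.sqrt (1 + u) - 1 :=
            Real.log_le_sub_one_of_pos (Real.sqrt_pos.2 (by positivity))
          have h3 : Real.sqrt (1 + u) ≤ 1 + s := by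
            have h4 := Real.sqrt_le_sqrt (show 1 + u ≤ (1 + s) ^ 2 by nlinarith)
            rwa [Real.sqrt_sq (by positivity)] at h4
          linarith
        have hfa1 : f a ≤ 2 * a * s := by
          have : f a = a * Real.log (1 + u) := by rw [hf, hudef]
          rw [this]
          nlinarith [hlog, ha]
        have hsq : (2 * a * s) ^ 2 = t ^ 2 / 2 := by
          have : (2 * a * s) ^ 2 = 4 * a ^ 2 * u := by rw [← hs2]; ring
          rw [this, hudef, hadef]
          field_simp
        nlinarith [hfa1, hsq, ht0, mul_nonneg (mul_nonneg (by norm_num : (0:ℝ) ≤ 2) ha.le) hs0]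
      -- large side : eventually f p > t
      have htend : Filter.Tendsto f Filter.atTop (nhds (1 / (2 * κ))) := by
        have h := Real.tendsto_mul_log_one_add_div_atTop (1 / (2 * κ))
        have heq : ∀ x : ℝ, x * Real.log (1 + 1 / (2 * κ) / x) = f x := by
          intro x; rw [hf]; rw [div_div]
        exact h.congr heq
      have hev : ∀ᶠ x in Filter.atTop, t < f x := htend.eventually (eventually_gt_nhds hlt)
      obtain ⟨b, hb⟩ := (hev.and (Filter.eventually_ge_atTop (a + 1))).exists
      have hab : a ≤ b := by linarith [hb.2]
      have hcont : ContinuousOn f (Set.Icc a b) := by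
        intro x hx
        have hx0 : 0 < x := lt_of_lt_of_le ha hx.1
        exact (phi_hasDeriv κ hκ hx0).continuousAt.continuousWithinAt
      have hmem : t ∈ Set.Icc (f a) (f b) := ⟨hfa.le, (hb.1).le⟩
      obtain ⟨p, hp, hfp⟩ := intermediate_value_Icc hab hcont hmem
      refine ⟨p, lt_of_lt_of_le ha hp.1, ?_⟩
      have hfp' : p * Real.log (1 + 1 / (2 * κ * p)) = t := hfp
      linarith
  · intro p hp hproot q hq hqroot
    have hp' : (0:ℝ) < p := hp
    have hq' : (0:ℝ) < q := hq
    exact (phi_strictMono κ hκ).injOn hq hp (show q * Real.log (1 + 1 / (2 * κ * q)) = p * Real.log (1 + 1 / (2 * κ * p)) by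
      linarith [hproot, hqroot])
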